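/- (Bäcklund transformation s₂ for Painlevé III′.) Let (q, p, H) solve the Painlevé III′ Hamiltonian system with parameters v1, v2 ∈ ℂ on an open set U ⊆ ℂ with 0 ∉ U. Define on −U := {−s : s ∈ U} the functions q̃(s) := −q(−s) and p̃(s) := 1 − p(−s). Then (q̃, p̃) solves the Painlevé III′ Hamiltonian system with parameters (v1, −v2) on −U, and its Hamiltonian H̃ satisfies (−s)·H̃(−s) = s·H(s) − s for all s ∈ U. -/

import Mathlib

open Complex

/-- `(q, p, H)` solves the Painlevé III′ Hamiltonian system with parameters
`v1, v2` on an open set `U ⊆ ℂ` with `0 ∉ U`. -/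
def SolvesPIII' (v1 v2 : ℂ) (U : Set ℂ) (q p H : ℂ → ℂ) : Prop :=
  IsOpen U ∧ (0 : ℂ) ∉ U ∧
    DifferentiableOn ℂ q U ∧ DifferentiableOn ℂ p U ∧
    (∀ s ∈ U, s * H s =
      q s ^ 2 * p s ^ 2 - (q s ^ 2 + v1 * q s - s) * p s
        + (1 / 2) * (v1 + v2) * q s) ∧
    (∀ s ∈ U, s * deriv q s = 2 * q s ^ 2 * p s - q s ^ 2 - v1 * q s + s) ∧
    (∀ s ∈ U, s * deriv p s =
      -2 * q s * p s ^ 2 + 2 * q s * p s + v1 * p s - (1 / 2) * (v1 + v2))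

/-- Bäcklund transformation `s₂` for Painlevé III′: `q̃(s) = −q(−s)`,
`p̃(s) = 1 − p(−s)` solves the system with parameters `(v1, −v2)` on `−U`, and
`(−s)·H̃(−s) = s·H(s) − s`. -/
theorem painleveIIIprime_backlund_s2 (v1 v2 : ℂ) (U : Set ℂ)
    (q p H : ℂ → ℂ)
    (hsol : SolvesPIII' v1 v2 U q p H)
    (qt pt : ℂ → ℂ)
    (hqt : ∀ s : ℂ, -s ∈ U → qt s = -q (-s))
    (hpt : ∀ s : ℂ, -s ∈ U → pt s = 1 - p (-s)) :
    ∃ Ht : ℂ → ℂ,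
      SolvesPIII' v1 (-v2) {s : ℂ | -s ∈ U} qt pt Ht ∧
      ∀ s ∈ U, (-s) * Ht (-s) = s * H s - s := by
  obtain ⟨hUopen, hU0, hqd, hpd, hH, hq', hp'⟩ := hsol
  set V : Set ℂ := {s : ℂ | -s ∈ U} with hVdef
  have hVopen : IsOpen V := hUopen.preimage (continuous_neg)
  have hV0 : (0 : ℂ) ∉ V := by simpa [hVdef] using hU0
  have hVne : ∀ s ∈ V, s ≠ 0 := by
    rintro s hs rfl; exact hV0 hs
  have hqderiv : ∀ s ∈ V, HasDerivAt qt (deriv q (-s)) s := by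
    intro s hs
    have hq : HasDerivAt q (deriv q (-s)) (-s) :=
      (hqd.differentiableAt (hUopen.mem_nhds hs)).hasDerivAt
    have h1 : HasDerivAt (fun x => -q (-x)) (deriv q (-s)) s := by
      have := (hq.comp s (hasDerivAt_neg s)).neg
      have h2 : HasDerivAt (-q ∘ Neg.neg) (deriv q (-s)) s := by simpa using this
      exact h2
    refine h1.congr_of_eventuallyEq ?_
    filter_upwards [hVopen.mem_nhds hs] with x hx
    exact hqt x hx
  have hpderiv : ∀ s ∈ V, HasDerivAt pt (deriv p (-s)) s := by
    intro s hs
    have hp : HasDerivAt p (deriv p (-s)) (-s) :=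
      (hpd.differentiableAt (hUopen.mem_nhds hs)).hasDerivAt
    have h1 : HasDerivAt (fun x => 1 - p (-x)) (deriv p (-s)) s := by
      have := (hp.comp s (hasDerivAt_neg s)).const_sub 1
      simpa using this
    refine h1.congr_of_eventuallyEq ?_
    filter_upwards [hVopen.mem_nhds hs] with x hx
    exact hpt x hx
  refine ⟨fun s => (qt s ^ 2 * pt s ^ 2 - (qt s ^ 2 + v1 * qt s - s) * pt s
      + (1 / 2) * (v1 + (-v2)) * qt s) / s, ⟨hVopen, hV0, ?_, ?_, ?_, ?_, ?_⟩, ?_⟩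
  · intro s hs
    exact ((hqderiv s hs).differentiableAt).differentiableWithinAt
  · intro s hs
    exact ((hpderiv s hs).differentiableAt).differentiableWithinAt
  · intro s hs
    field_simp [hVne s hs]
  · intro s hs
    rw [(hqderiv s hs).deriv, hqt s hs, hpt s hs]
    linear_combination -(hq' (-s) hs)
  · intro s hs
    rw [(hpderiv s hs).deriv, hqt s hs, hpt s hs]
    linear_combination -(hp' (-s) hs)
  · intro s hs
    have hsV : -s ∈ V := by simpa [hVdef] using hs
    have hs0 : (-s : ℂ) ≠ 0 := hVne _ hsV
    have hqe : qt (-s) = -q s := by simpa using hqt (-s) (by simpa using hs)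
    have hpe : pt (-s) = 1 - p s := by simpa using hpt (-s) (by simpa using hs)
    beta_reduce
    rw [hqe, hpe, mul_comm, div_mul_cancel₀ _ hs0]
    linear_combination -(hH s hs)
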